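/- Let X be a real uniformly smooth Banach space with modulus of smoothness ρ_X, let S ⊆ X be a bounded set and let a ∈ conv S. Then there is an absolute constant C > 0 (independent of X, S, a; one may take C = 16) and a sequence x_1, x_2, … of points of S such that, setting a_k = (1/k)·∑_{i=1}^k x_i, for every integer k ≥ 1 and every real τ > 0 with ρ_X(τ) ≤ 1/k one has ‖a − a_k‖ ≤ C·diam(S)/(k·τ). -/

import Mathlib

open Asymptotics Filter Topology

/-- The modulus of smoothness (Lindenstrauss modulus) of a real normed space `X`:
`ρ_X(τ) = sup { (‖x + τy‖ + ‖x − τy‖)/2 − 1 : ‖x‖ = ‖y‖ ≤ 1 }`. -/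
noncomputable def modSmooth (X : Type*) [NormedAddCommGroup X] [NormedSpace ℝ X] (τ : ℝ) : ℝ :=
  sSup {r : ℝ | ∃ x y : X, ‖x‖ = ‖y‖ ∧ ‖y‖ ≤ 1 ∧
    r = (‖x + τ • y‖ + ‖x - τ • y‖) / 2 - 1}

section Aux
variable {X : Type*} [NormedAddCommGroup X] [NormedSpace ℝ X]

lemma msSet_nonempty (τ : ℝ) : Set.Nonempty {r : ℝ | ∃ x y : X, ‖x‖ = ‖y‖ ∧ ‖y‖ ≤ 1 ∧
    r = (‖x + τ • y‖ + ‖x - τ • y‖) / 2 - 1} :=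
  ⟨-1, 0, 0, by simp⟩

lemma msSet_bddAbove {τ : ℝ} (hτ : 0 ≤ τ) : BddAbove {r : ℝ | ∃ x y : X, ‖x‖ = ‖y‖ ∧ ‖y‖ ≤ 1 ∧
    r = (‖x + τ • y‖ + ‖x - τ • y‖) / 2 - 1} := by
  refine ⟨τ, fun r hr => ?_⟩
  obtain ⟨x, y, hxy, hy, rfl⟩ := hr
  have h1 : ‖x + τ • y‖ ≤ ‖x‖ + τ * ‖y‖ := by
    calc ‖x + τ • y‖ ≤ ‖x‖ + ‖τ • y‖ := norm_add_le _ _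
    _ = ‖x‖ + |τ| * ‖y‖ := by rw [norm_smul, Real.norm_eq_abs]
    _ = ‖x‖ + τ * ‖y‖ := by rw [abs_of_nonneg hτ]
  have h2 : ‖x - τ • y‖ ≤ ‖x‖ + τ * ‖y‖ := by
    calc ‖x - τ • y‖ ≤ ‖x‖ + ‖τ • y‖ := norm_sub_le _ _
    _ = ‖x‖ + τ * ‖y‖ := by rw [norm_smul, Real.norm_eq_abs, abs_of_nonneg hτ]
  have hx1 : ‖x‖ ≤ 1 := hxy ▸ hy
  nlinarith [norm_nonneg y]

lemma ms_member_le {τ : ℝ} (hτ : 0 ≤ τ) (x y : X) (hxy : ‖x‖ = ‖y‖) (hy : ‖y‖ ≤ 1) :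
    (‖x + τ • y‖ + ‖x - τ • y‖) / 2 - 1 ≤ modSmooth X τ :=
  le_csSup (msSet_bddAbove hτ) ⟨x, y, hxy, hy, rfl⟩

lemma ms_ge_sub_one [Nontrivial X] {τ : ℝ} (hτ : 0 ≤ τ) :
    τ - 1 ≤ modSmooth X τ ∧ 0 ≤ modSmooth X τ := by
  obtain ⟨z, hz⟩ := exists_ne (0 : X)
  set x : X := ‖z‖⁻¹ • z with hx
  have hx1 : ‖x‖ = 1 := norm_smul_inv_norm hz
  have h := ms_member_le hτ x x rfl hx1.le
  have e1 : ‖x + τ • x‖ = 1 + τ := by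
    have : x + τ • x = (1 + τ) • x := by rw [add_smul, one_smul]
    rw [this, norm_smul, Real.norm_eq_abs, abs_of_nonneg (by linarith), hx1, mul_one]
  have e2 : ‖x - τ • x‖ = |1 - τ| := by
    have : x - τ • x = (1 - τ) • x := by rw [sub_smul, one_smul]
    rw [this, norm_smul, Real.norm_eq_abs, hx1, mul_one]
  rw [e1, e2] at h
  have habs1 : τ - 1 ≤ |1 - τ| := by rw [abs_sub_comm]; exact le_abs_self _
  have habs2 : 1 - τ ≤ |1 - τ| := le_abs_self _
  constructor <;> nlinarith

lemma ms_zero_nonpos : modSmooth X (0 : ℝ) ≤ 0 := by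
  apply csSup_le (msSet_nonempty 0)
  rintro r ⟨x, y, hxy, hy, rfl⟩
  have hx1 : ‖x‖ ≤ 1 := hxy ▸ hy
  simp only [zero_smul, add_zero, sub_zero]
  linarith

lemma ms_scale [Nontrivial X] {s t : ℝ} (hs : 0 ≤ s) (hst : s ≤ t) (ht : 0 < t) :
    modSmooth X s ≤ (s / t) * modSmooth X t := by
  rcases eq_or_lt_of_le hs with hs0 | hs0
  · rw [← hs0]
    simpa using ms_zero_nonpos (X := X)
  apply csSup_le (msSet_nonempty s)
  rintro r ⟨x, y, hxy, hy, rfl⟩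
  have hx1 : ‖x‖ ≤ 1 := hxy ▸ hy
  have hts : t ≠ 0 := ht.ne'
  have hdiv0 : 0 ≤ s / t := div_nonneg hs ht.le
  have hdiv1 : s / t ≤ 1 := (div_le_one ht).mpr hst
  have key : ∀ ε : ℝ, ε = 1 ∨ ε = -1 →
      ‖x + (ε * s) • y‖ ≤ (1 - s / t) * ‖x‖ + (s / t) * ‖x + (ε * t) • y‖ := by
    intro ε hε
    have hdecomp : x + (ε * s) • y = (1 - s / t) • x + (s / t) • (x + (ε * t) • y) := by
      rw [smul_add, smul_smul, sub_smul, one_smul]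
      have : s / t * (ε * t) = ε * s := by field_simp
      rw [this]; abel
    rw [hdecomp]
    calc ‖(1 - s / t) • x + (s / t) • (x + (ε * t) • y)‖
        ≤ ‖(1 - s / t) • x‖ + ‖(s / t) • (x + (ε * t) • y)‖ := norm_add_le _ _
      _ = (1 - s / t) * ‖x‖ + (s / t) * ‖x + (ε * t) • y‖ := by
          rw [norm_smul, norm_smul, Real.norm_eq_abs, Real.norm_eq_abs,
            abs_of_nonneg (by linarith), abs_of_nonneg hdiv0]
  have h1 := key 1 (Or.inl rfl)
  have h2 := key (-1) (Or.inr rfl)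
  simp only [one_mul, neg_mul, neg_smul, ← sub_eq_add_neg] at h1 h2
  have hmem := ms_member_le ht.le x y hxy hy
  have hρt : 0 ≤ modSmooth X t := (ms_ge_sub_one ht.le).2
  nlinarith [mul_le_mul_of_nonneg_left hmem hdiv0,
    mul_le_mul_of_nonneg_left hx1 (by linarith : (0:ℝ) ≤ 1 - s / t)]

lemma ms_mono [Nontrivial X] {s t : ℝ} (hs : 0 ≤ s) (hst : s ≤ t) :
    modSmooth X s ≤ modSmooth X t := by
  rcases eq_or_lt_of_le (hs.trans hst) with ht0 | ht0
  · have : s = 0 := le_antisymm (ht0 ▸ hst) hs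
    rw [this, ← ht0]
  · have h1 := ms_scale (X := X) hs hst ht0
    have hρt : 0 ≤ modSmooth X t := (ms_ge_sub_one ht0.le).2
    have : s / t ≤ 1 := (div_le_one ht0).mpr hst
    nlinarith

/-- The central smoothness inequality: if `f` norms `u` and `f v ≤ 0`, then
`‖u + v‖ ≤ ‖u‖ + 2‖u‖ρ(‖v‖/‖u‖)`. -/
lemma smooth_ineq [Nontrivial X] (u v : X) (hu : u ≠ 0) (f : X →L[ℝ] ℝ)
    (hf : ‖f‖ = 1) (hfu : f u = ‖u‖) (hfv : f v ≤ 0) :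
    ‖u + v‖ ≤ ‖u‖ + 2 * ‖u‖ * modSmooth X (‖v‖ / ‖u‖) := by
  have hc : (0:ℝ) < ‖u‖ := norm_pos_iff.mpr hu
  by_cases hv : v = 0
  · subst hv
    simp only [norm_zero, zero_div, add_zero]
    have := (ms_ge_sub_one (X := X) le_rfl).2
    nlinarith
  have hvn : (0:ℝ) < ‖v‖ := norm_pos_iff.mpr hv
  set τ := ‖v‖ / ‖u‖ with hτdef
  have hτ0 : 0 ≤ τ := div_nonneg hvn.le hc.le
  set x : X := ‖u‖⁻¹ • u with hxdef
  set y : X := ‖v‖⁻¹ • v with hydef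
  have hx1 : ‖x‖ = 1 := norm_smul_inv_norm hu
  have hy1 : ‖y‖ = 1 := norm_smul_inv_norm hv
  have hcoef : τ * ‖v‖⁻¹ = ‖u‖⁻¹ := by
    rw [hτdef]
    field_simp
  have hplus : x + τ • y = ‖u‖⁻¹ • (u + v) := by
    rw [hxdef, hydef, smul_smul, smul_add, hcoef]
  have hminus : x - τ • y = ‖u‖⁻¹ • (u - v) := by
    rw [hxdef, hydef, smul_smul, smul_sub, hcoef]
  have hmem := ms_member_le hτ0 x y (by rw [hx1, hy1]) hy1.le
  rw [hplus, hminus, norm_smul, norm_smul, Real.norm_eq_abs,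
    abs_of_nonneg (inv_nonneg.mpr hc.le)] at hmem
  -- ‖u - v‖ ≥ ‖u‖
  have hlow : ‖u‖ ≤ ‖u - v‖ := by
    have h1 : f (u - v) ≤ ‖u - v‖ := by
      calc f (u - v) ≤ |f (u - v)| := le_abs_self _
        _ = ‖f (u - v)‖ := (Real.norm_eq_abs _).symm
        _ ≤ ‖f‖ * ‖u - v‖ := f.le_opNorm _
        _ = ‖u - v‖ := by rw [hf, one_mul]
    have h2 : f (u - v) = ‖u‖ - f v := by rw [map_sub, hfu]
    linarith
  have huinv : ‖u‖⁻¹ * ‖u‖ = 1 := inv_mul_cancel₀ hc.ne'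
  have h3 : ‖u‖⁻¹ * ‖u + v‖ ≤ 1 + 2 * modSmooth X τ := by
    nlinarith [mul_le_mul_of_nonneg_left hlow (inv_nonneg.mpr hc.le)]
  have h4 := mul_le_mul_of_nonneg_left h3 hc.le
  rw [← mul_assoc, mul_inv_cancel₀ hc.ne', one_mul] at h4
  nlinarith

end Aux

/-- No-dimension Carathéodory theorem in uniformly smooth Banach spaces (with the
absolute constant `C = 16`): for a bounded set `S` and `a ∈ conv S` there is a sequence
of points of `S` whose running averages `a_k` satisfy
`‖a − a_k‖ ≤ 16 · diam S / (k · τ)` whenever `ρ_X(τ) ≤ 1/k`. -/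
theorem no_dim_caratheodory {X : Type*} [NormedAddCommGroup X] [NormedSpace ℝ X]
    [CompleteSpace X]
    (hus : (fun t => modSmooth X t) =o[𝓝[>] (0 : ℝ)] fun t => t)
    (S : Set X) (hS : Bornology.IsBounded S) (a : X) (ha : a ∈ convexHull ℝ S) :
    ∃ x : ℕ → X, (∀ i, x i ∈ S) ∧
      ∀ k : ℕ, 1 ≤ k → ∀ τ : ℝ, 0 < τ → modSmooth X τ ≤ 1 / (k : ℝ) →
        ‖a - (k : ℝ)⁻¹ • ∑ i ∈ Finset.range k, x i‖ ≤
          16 * Metric.diam S / ((k : ℝ) * τ) := by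
  classical
  -- S is nonempty
  have hSne : S.Nonempty := by
    by_contra h
    rw [Set.not_nonempty_iff_eq_empty] at h
    rw [h, convexHull_empty] at ha
    exact ha
  obtain ⟨s₀, hs₀⟩ := hSne
  rcases subsingleton_or_nontrivial X with hsub | hnt
  · -- trivial space: everything is zero
    refine ⟨fun _ => s₀, fun _ => hs₀, fun k hk τ hτ _ => ?_⟩
    have : a - (k : ℝ)⁻¹ • ∑ i ∈ Finset.range k, (fun _ => s₀) i = 0 := Subsingleton.elim _ _
    rw [this, norm_zero]
    have hkpos : (0:ℝ) < (k : ℝ) := by exact_mod_cast hk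
    positivity
  -- main case
  set D := Metric.diam S with hDdef
  have hD0 : (0:ℝ) ≤ D := Metric.diam_nonneg
  have hconvb : Bornology.IsBounded (convexHull ℝ S) := isBounded_convexHull.mpr hS
  have hdist : ∀ s ∈ S, ‖s - a‖ ≤ D := by
    intro s hs
    have h1 : dist s a ≤ Metric.diam (convexHull ℝ S) :=
      Metric.dist_le_diam_of_mem hconvb (subset_convexHull ℝ S hs) ha
    rw [convexHull_diam] at h1
    rwa [dist_eq_norm] at h1
  -- for each σ we can choose a next point
  have hnext : ∀ σ : X, ∃ s, s ∈ S ∧ (σ = 0 ∨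
      ∃ f : X →L[ℝ] ℝ, ‖f‖ = 1 ∧ f σ = ‖σ‖ ∧ f s ≤ f a) := by
    intro σ
    by_cases hσ : σ = 0
    · exact ⟨s₀, hs₀, Or.inl hσ⟩
    · obtain ⟨f, hf1, hfσ⟩ := exists_dual_vector ℝ σ (norm_ne_zero_iff.mpr hσ)
      have hex : ∃ s ∈ S, f s ≤ f a := by
        by_contra h
        push_neg at h
        have hcx : Convex ℝ {w : X | f a < f w} :=
          convex_halfSpace_gt ⟨f.map_add, f.map_smul⟩ (f a)
        have := convexHull_min (fun s hs => h s hs) hcx ha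
        exact lt_irrefl (f a) this
      obtain ⟨s, hsS, hsa⟩ := hex
      exact ⟨s, hsS, Or.inr ⟨f, hf1, hfσ, hsa⟩⟩
  choose next hnextS hnextP using hnext
  -- the greedy sequence of partial "centered" sums
  let σ : ℕ → X := fun n => Nat.rec (motive := fun _ => X) 0 (fun _ s => s + (next s - a)) n
  have hσ0 : σ 0 = 0 := rfl
  have hσs : ∀ n, σ (n + 1) = σ n + (next (σ n) - a) := fun n => rfl
  refine ⟨fun n => next (σ n), fun n => hnextS _, ?_⟩
  have hsum : ∀ k : ℕ, ∑ i ∈ Finset.range k, next (σ i) = σ k + (k : ℝ) • a := by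
    intro k
    induction k with
    | zero => simp [hσ0]
    | succ k ih =>
      rw [Finset.sum_range_succ, ih, hσs k]
      push_cast
      rw [add_smul, one_smul]
      abel
  -- key induction
  have key : ∀ k : ℕ, 1 ≤ k → ∀ τ : ℝ, 0 < τ → modSmooth X τ ≤ 1 / (k : ℝ) →
      ‖σ k‖ ≤ D * (10 + 2 * (k : ℝ) * modSmooth X τ) / τ := by
    intro k hk
    induction k, hk using Nat.le_induction with
    | base =>
      intro τ hτ hρ
      have hρτ : modSmooth X τ ≤ 1 := by simpa using hρ
      have hτ2 : τ ≤ 2 := by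
        have := (ms_ge_sub_one (X := X) hτ.le).1
        linarith
      have h1 : ‖σ 1‖ ≤ D := by
        have e : σ 1 = next (σ 0) - a := by
          have h := hσs 0
          simpa [hσ0] using h
        rw [e, hσ0]
        exact hdist _ (hnextS _)
      have hρ0 : 0 ≤ modSmooth X τ := (ms_ge_sub_one (X := X) hτ.le).2
      rw [Nat.cast_one, le_div_iff₀ hτ]
      nlinarith [mul_le_mul_of_nonneg_right h1 hτ.le,
        mul_le_mul_of_nonneg_left hτ2 hD0, mul_nonneg hD0 hρ0]
    | succ k hk ih =>
      intro τ hτ hρ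
      have hkpos : (0:ℝ) < (k : ℝ) := by exact_mod_cast hk
      have hρ' : modSmooth X τ ≤ 1 / (k : ℝ) := by
        refine hρ.trans ?_
        apply one_div_le_one_div_of_le hkpos
        push_cast; linarith
      have hIH := ih τ hτ hρ'
      have hρ0 : 0 ≤ modSmooth X τ := (ms_ge_sub_one (X := X) hτ.le).2
      have hρ1 : modSmooth X τ ≤ 1 := by
        refine hρ.trans ?_
        rw [div_le_one (by positivity)]
        push_cast; linarith
      have hτ2 : τ ≤ 2 := by
        have := (ms_ge_sub_one (X := X) hτ.le).1
        linarith
      have hv : ‖next (σ k) - a‖ ≤ D := hdist _ (hnextS _)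
      by_cases hcase : ‖σ k‖ ≤ 8 * D / τ
      · -- small case
        have h1 : ‖σ (k + 1)‖ ≤ ‖σ k‖ + ‖next (σ k) - a‖ := by
          rw [hσs k]; exact norm_add_le _ _
        have h2 : ‖σ (k + 1)‖ ≤ 8 * D / τ + D := by linarith
        rw [div_add' _ _ _ hτ.ne'] at h2
        refine h2.trans ?_
        rw [div_le_div_iff₀ hτ hτ]
        push_cast
        nlinarith [mul_le_mul_of_nonneg_left hτ2 hD0,
          mul_nonneg (mul_nonneg hD0 hρ0) hτ.le,
          mul_nonneg (mul_nonneg hkpos.le hρ0) (mul_nonneg hD0 hτ.le)]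
      · -- large case
        push_neg at hcase
        have hpos : (0:ℝ) < ‖σ k‖ := lt_of_le_of_lt (by positivity) hcase
        have hσne : σ k ≠ 0 := by
          intro h
          rw [h, norm_zero] at hpos
          exact lt_irrefl _ hpos
        obtain ⟨f, hf1, hfσ, hfle⟩ := (hnextP (σ k)).resolve_left hσne
        have hfv : f (next (σ k) - a) ≤ 0 := by
          rw [map_sub, sub_nonpos]; exact hfle
        have hmain : ‖σ (k + 1)‖ ≤
            ‖σ k‖ + 2 * ‖σ k‖ * modSmooth X (‖next (σ k) - a‖ / ‖σ k‖) := by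
          rw [hσs k]
          exact smooth_ineq (σ k) _ hσne f hf1 hfσ hfv
        -- ‖v‖/‖σ k‖ ≤ τ
        have hDτ : 8 * D < ‖σ k‖ * τ := by
          rw [div_lt_iff₀ hτ] at hcase
          linarith
        have hsle : ‖next (σ k) - a‖ / ‖σ k‖ ≤ τ := by
          rw [div_le_iff₀ hpos]
          nlinarith
        have hscale := ms_scale (X := X)
          (div_nonneg (norm_nonneg _) hpos.le) hsle hτ
        have hstep : 2 * ‖σ k‖ * modSmooth X (‖next (σ k) - a‖ / ‖σ k‖) ≤
            2 * D * modSmooth X τ / τ := by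
          have h1 : 2 * ‖σ k‖ * modSmooth X (‖next (σ k) - a‖ / ‖σ k‖) ≤
              2 * ‖σ k‖ * ((‖next (σ k) - a‖ / ‖σ k‖) / τ * modSmooth X τ) := by
            apply mul_le_mul_of_nonneg_left hscale (by positivity)
          have h2 : 2 * ‖σ k‖ * ((‖next (σ k) - a‖ / ‖σ k‖) / τ * modSmooth X τ) =
              2 * ‖next (σ k) - a‖ * modSmooth X τ / τ := by
            field_simp
          rw [h2] at h1
          refine h1.trans ?_
          rw [div_le_div_iff₀ hτ hτ]
          nlinarith [mul_le_mul_of_nonneg_right hv hρ0, mul_nonneg hρ0 hτ.le]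
        have hfinal : ‖σ (k + 1)‖ ≤ D * (10 + 2 * (k : ℝ) * modSmooth X τ) / τ
            + 2 * D * modSmooth X τ / τ := by linarith
        refine hfinal.trans ?_
        rw [← add_div]
        apply le_of_eq
        push_cast
        ring
  -- conclude
  intro k hk τ hτ hρ
  have hkpos : (0:ℝ) < (k : ℝ) := by exact_mod_cast hk
  have hkey := key k hk τ hτ hρ
  have heq : a - (k : ℝ)⁻¹ • ∑ i ∈ Finset.range k, next (σ i) = -((k : ℝ)⁻¹ • σ k) := by
    rw [hsum k, smul_add, smul_smul, inv_mul_cancel₀ hkpos.ne', one_smul]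
    abel
  rw [heq, norm_neg, norm_smul, Real.norm_eq_abs, abs_of_pos (inv_pos.mpr hkpos)]
  have hkρ : (k : ℝ) * modSmooth X τ ≤ 1 := by
    have := mul_le_mul_of_nonneg_left hρ hkpos.le
    rwa [mul_one_div, div_self hkpos.ne'] at this
  have hρ0 : 0 ≤ modSmooth X τ := (ms_ge_sub_one (X := X) hτ.le).2
  calc (k : ℝ)⁻¹ * ‖σ k‖ ≤ (k : ℝ)⁻¹ * (D * (10 + 2 * (k : ℝ) * modSmooth X τ) / τ) := by
        apply mul_le_mul_of_nonneg_left hkey (by positivity)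
    _ ≤ (k : ℝ)⁻¹ * (16 * D / τ) := by
        apply mul_le_mul_of_nonneg_left ?_ (by positivity)
        rw [div_le_div_iff₀ hτ hτ]
        nlinarith [mul_le_mul_of_nonneg_left hkρ hD0, mul_nonneg hD0 hτ.le]
    _ = 16 * D / ((k : ℝ) * τ) := by
        field_simp
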